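/- With two predictors and notation as above (simple slopes a₁, a₂ of Y on X₁, X₂; multiple coefficients b₁, b₂; cross-slopes c₁₂, c₂₁; correlation r), the identities b₁c₁₂ = a₂ − b₂ and b₂c₂₁ = a₁ − b₁ hold, and consequently r² = a₁a₂/(b₁b₂) − a₁/b₁ − a₂/b₂ + 1 whenever b₁ ≠ 0 and b₂ ≠ 0. -/

import Mathlib

open Finset Filter

/-- Sample mean of a data vector. -/
noncomputable def mean (p : ℕ) (x : Fin p → ℝ) : ℝ := (∑ i, x i) / (p : ℝ)

/-- Sample covariance of two data vectors. -/
noncomputable def cov (p : ℕ) (x y : Fin p → ℝ) : ℝ :=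
  (∑ i, (x i - mean p x) * (y i - mean p y)) / (p : ℝ)

/-- Sample variance of a data vector. -/
noncomputable def svar (p : ℕ) (x : Fin p → ℝ) : ℝ := cov p x x

/-- Slope of the simple least-squares regression of `y` on `x`. -/
noncomputable def regSlope (p : ℕ) (x y : Fin p → ℝ) : ℝ := cov p x y / svar p x

lemma quad_zero {L Q : ℝ} (hQ : 0 ≤ Q) (h : ∀ ε : ℝ, 0 ≤ -2*ε*L + ε^2*Q) : L = 0 := by
  have h1 := h (L/(Q+1))
  have hQ1 : (0:ℝ) < Q + 1 := by linarith
  have h2 : 0 ≤ (-2*(L/(Q+1))*L + (L/(Q+1))^2*Q) * (Q+1)^2 :=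
    mul_nonneg h1 (by positivity)
  have h3 : (-2*(L/(Q+1))*L + (L/(Q+1))^2*Q) * (Q+1)^2 = -(L^2*(Q+2)) := by
    field_simp
    ring
  rw [h3] at h2
  nlinarith [sq_nonneg L]

lemma cov_eq (p : ℕ) (hp : (p:ℝ) ≠ 0) (x y : Fin p → ℝ) :
    cov p x y = (∑ i, x i * y i) / p - mean p x * mean p y := by
  unfold cov mean
  have : ∑ i, (x i - (∑ j, x j)/p) * (y i - (∑ j, y j)/p)
      = ∑ i, (x i * y i - ((∑ j, x j)/p) * y i - ((∑ j, y j)/p) * x i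
          + ((∑ j, x j)/p) * ((∑ j, y j)/p)) := by
    apply Finset.sum_congr rfl; intro i _; ring
  rw [this]
  simp only [Finset.sum_add_distrib, Finset.sum_sub_distrib, ← Finset.mul_sum,
    Finset.sum_const, Finset.card_fin, nsmul_eq_mul]
  field_simp
  ring

lemma cov_mul (p : ℕ) (hp : (p:ℝ) ≠ 0) (x y : Fin p → ℝ) :
    (p:ℝ)^2 * cov p x y = p * ∑ i, x i * y i - (∑ i, x i) * (∑ i, y i) := by
  rw [cov_eq p hp]
  unfold mean
  field_simp

lemma cov_comm (p : ℕ) (x y : Fin p → ℝ) : cov p x y = cov p y x := by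
  unfold cov
  congr 1
  apply Finset.sum_congr rfl; intro i _; ring

theorem regression_coeff_identities
    (p : ℕ) (Y X1 X2 : Fin p → ℝ) (b0 b1 b2 : ℝ)
    (hBmin : ∀ t0 t1 t2 : ℝ,
      ∑ i, (Y i - b0 - b1 * X1 i - b2 * X2 i)^2 ≤ ∑ i, (Y i - t0 - t1 * X1 i - t2 * X2 i)^2)
    (hBuniq : ∀ t0 t1 t2 : ℝ,
      ∑ i, (Y i - t0 - t1 * X1 i - t2 * X2 i)^2 ≤ ∑ i, (Y i - b0 - b1 * X1 i - b2 * X2 i)^2 →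
      t0 = b0 ∧ t1 = b1 ∧ t2 = b2)
    (hv1 : svar p X1 ≠ 0) (hv2 : svar p X2 ≠ 0)
    (hr : (cov p X1 X2)^2 ≠ svar p X1 * svar p X2) :
    b1 * regSlope p X2 X1 = regSlope p X2 Y - b2 ∧
    b2 * regSlope p X1 X2 = regSlope p X1 Y - b1 ∧
    (b1 ≠ 0 → b2 ≠ 0 →
      (cov p X1 X2)^2 / (svar p X1 * svar p X2) =
        regSlope p X1 Y * regSlope p X2 Y / (b1 * b2)
          - regSlope p X1 Y / b1 - regSlope p X2 Y / b2 + 1) := by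
  have hp : (p:ℝ) ≠ 0 := by
    intro h
    apply hv1
    have hp0 : p = 0 := by exact_mod_cast h
    subst hp0
    simp [svar, cov]
  -- normal equations via perturbations
  have key : ∀ d0 d1 d2 : ℝ,
      ∑ i, (Y i - b0 - b1 * X1 i - b2 * X2 i) * (d0 + d1 * X1 i + d2 * X2 i) = 0 := by
    intro d0 d1 d2
    apply quad_zero (Q := ∑ i, (d0 + d1 * X1 i + d2 * X2 i)^2)
    · positivity
    · intro ε
      have h := hBmin (b0 + ε*d0) (b1 + ε*d1) (b2 + ε*d2)
      have expand : ∑ i, (Y i - (b0 + ε*d0) - (b1 + ε*d1) * X1 i - (b2 + ε*d2) * X2 i)^2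
          = ∑ i, ((Y i - b0 - b1 * X1 i - b2 * X2 i)^2
            - 2*ε*((Y i - b0 - b1 * X1 i - b2 * X2 i) * (d0 + d1 * X1 i + d2 * X2 i))
            + ε^2 * (d0 + d1 * X1 i + d2 * X2 i)^2) := by
        apply Finset.sum_congr rfl; intro i _; ring
      rw [expand] at h
      simp only [Finset.sum_add_distrib, Finset.sum_sub_distrib, ← Finset.mul_sum] at h
      linarith
  have h0 := key 1 0 0
  have h1 := key 0 1 0
  have h2 := key 0 0 1
  simp only [zero_mul, one_mul, mul_zero, add_zero, zero_add, mul_one] at h0 h1 h2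
  -- expand to sums
  have e0 : ∑ i, Y i = p * b0 + b1 * ∑ i, X1 i + b2 * ∑ i, X2 i := by
    have : ∑ i, (Y i - b0 - b1 * X1 i - b2 * X2 i)
        = ∑ i, Y i - p * b0 - b1 * ∑ i, X1 i - b2 * ∑ i, X2 i := by
      simp only [Finset.sum_sub_distrib, ← Finset.mul_sum, Finset.sum_const,
        Finset.card_fin, nsmul_eq_mul]
    rw [this] at h0; linarith
  have e1 : ∑ i, Y i * X1 i = b0 * ∑ i, X1 i + b1 * ∑ i, X1 i * X1 i
      + b2 * ∑ i, X2 i * X1 i := by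
    have : ∑ i, (Y i - b0 - b1 * X1 i - b2 * X2 i) * X1 i
        = ∑ i, Y i * X1 i - b0 * ∑ i, X1 i - b1 * ∑ i, X1 i * X1 i
          - b2 * ∑ i, X2 i * X1 i := by
      simp only [sub_mul, Finset.sum_sub_distrib, ← Finset.mul_sum, mul_assoc]
    rw [this] at h1; linarith
  have e2 : ∑ i, Y i * X2 i = b0 * ∑ i, X2 i + b1 * ∑ i, X1 i * X2 i
      + b2 * ∑ i, X2 i * X2 i := by
    have : ∑ i, (Y i - b0 - b1 * X1 i - b2 * X2 i) * X2 i
        = ∑ i, Y i * X2 i - b0 * ∑ i, X2 i - b1 * ∑ i, X1 i * X2 i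
          - b2 * ∑ i, X2 i * X2 i := by
      simp only [sub_mul, Finset.sum_sub_distrib, ← Finset.mul_sum, mul_assoc]
    rw [this] at h2; linarith
  -- covariance normal equations
  have hp2 : ((p:ℝ)^2) ≠ 0 := pow_ne_zero _ hp
  have ceq1 : cov p X1 Y = b1 * svar p X1 + b2 * cov p X1 X2 := by
    have c1 := cov_mul p hp Y X1
    have c11 := cov_mul p hp X1 X1
    have c12 := cov_mul p hp X2 X1
    rw [cov_comm p X1 Y, show cov p X1 X2 = cov p X2 X1 from cov_comm p X1 X2]
    apply mul_left_cancel₀ hp2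
    simp only [svar]
    linear_combination c1 - b1*c11 - b2*c12 + (p:ℝ)*e1 - (∑ i, X1 i)*e0
  have ceq2 : cov p X2 Y = b1 * cov p X1 X2 + b2 * svar p X2 := by
    have c2 := cov_mul p hp Y X2
    have c22 := cov_mul p hp X2 X2
    have c12 := cov_mul p hp X1 X2
    rw [cov_comm p X2 Y]
    apply mul_left_cancel₀ hp2
    simp only [svar]
    linear_combination c2 - b2*c22 - b1*c12 + (p:ℝ)*e2 - (∑ i, X2 i)*e0
  have hsymm : cov p X2 X1 = cov p X1 X2 := cov_comm p X2 X1
  refine ⟨?_, ?_, ?_⟩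
  · simp only [regSlope]
    rw [hsymm, ceq2]
    field_simp
    ring
  · simp only [regSlope]
    rw [ceq1]
    field_simp
    ring
  · intro hb1 hb2
    simp only [regSlope]
    rw [ceq1, ceq2]
    field_simp
    ring
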